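/- Let k be a commutative ring, X a simplicial unbounded chain complex over k, and n ≥ 1. For 0 ≤ r ≤ n−1 define the subcomplex s_{[r]}X_{n−1} := Σ_{0 ≤ i ≤ r} im(sᵢ : X_{n−1} → Xₙ) ⊆ Xₙ, so that s_{[0]}X_{n−1} ≅ X_{n−1} and s_{[n−1]}X_{n−1} = DXₙ. Then for 0 ≤ r ≤ n−1, the degeneracy s_{r+1} : Xₙ → X_{n+1} carries s_{[r]}X_{n−1} into s_{[r]}Xₙ, and the commutative square with top map s_{r+1} : s_{[r]}X_{n−1} → s_{[r]}Xₙ, left map the inclusion s_{[r]}X_{n−1} ⊆ Xₙ, right map the inclusion s_{[r]}Xₙ ⊆ s_{[r+1]}Xₙ, and bottom map s_{r+1} : Xₙ → s_{[r+1]}Xₙ, is a pushout square in Ch_k; moreover all four maps in this square are monomorphisms. -/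

import Mathlib

open CategoryTheory CategoryTheory.Limits Opposite

variable (k : Type) [CommRing k]

noncomputable def sSub (X : SimplicialObject (ChainComplex (ModuleCat.{0} k) ℤ)) (m r : ℕ)
    (h : r + 1 ≤ m + 1) : Subobject (X.obj (op (SimplexCategory.mk (m + 1)))) :=
  Finset.univ.sup fun i : Fin (r + 1) => imageSubobject (X.σ (Fin.castLE h i))

section Aux
set_option maxHeartbeats 1000000
variable {k}

lemma arrowInj {K : ChainComplex (ModuleCat.{0} k) ℤ} (S : Subobject K) (j : ℤ) :
    Function.Injective (S.arrow.f j) := by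
  rw [← ModuleCat.mono_iff_injective]
  infer_instance

lemma factors_of_range_le {K L : ChainComplex (ModuleCat.{0} k) ℤ} (S : Subobject K) (f : L ⟶ K)
    (hf : ∀ (j : ℤ) (x : L.X j), f.f j x ∈ LinearMap.range (S.arrow.f j).hom) :
    S.Factors f := by
  have inj : ∀ j, Function.Injective (S.arrow.f j) := arrowInj S
  let g : ∀ j : ℤ, L.X j ⟶ ((S : ChainComplex (ModuleCat.{0} k) ℤ) :
      ChainComplex (ModuleCat.{0} k) ℤ).X j := fun j =>
    ModuleCat.ofHom (((LinearEquiv.ofInjective (S.arrow.f j).hom (inj j)).symm.toLinearMap).comp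
      (LinearMap.codRestrict _ (f.f j).hom (hf j)))
  have hg : ∀ (j : ℤ) (x : L.X j), S.arrow.f j (g j x) = f.f j x := by
    intro j x
    show (S.arrow.f j).hom ((LinearEquiv.ofInjective (S.arrow.f j).hom (inj j)).symm _) = _
    rw [LinearEquiv.ofInjective_symm_apply]
    rfl
  refine (Subobject.factors_iff _ _).mpr ⟨{ f := g, comm' := ?_ }, ?_⟩
  · intro i j _
    refine ModuleCat.hom_ext (LinearMap.ext fun x => ?_)
    apply inj j
    show S.arrow.f j (((S : ChainComplex (ModuleCat.{0} k) ℤ) :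
        ChainComplex (ModuleCat.{0} k) ℤ).d i j (g i x)) = S.arrow.f j (g j (L.d i j x))
    have c1 : S.arrow.f j (((S : ChainComplex (ModuleCat.{0} k) ℤ) :
          ChainComplex (ModuleCat.{0} k) ℤ).d i j (g i x)) =
        K.d i j (S.arrow.f i (g i x)) := by
      have h := S.arrow.comm i j
      calc S.arrow.f j (((S : ChainComplex (ModuleCat.{0} k) ℤ) :
            ChainComplex (ModuleCat.{0} k) ℤ).d i j (g i x))
          = (((S : ChainComplex (ModuleCat.{0} k) ℤ) : ChainComplex (ModuleCat.{0} k) ℤ).d i j ≫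
              S.arrow.f j) (g i x) := rfl
        _ = (S.arrow.f i ≫ K.d i j) (g i x) := by rw [h]
        _ = K.d i j (S.arrow.f i (g i x)) := rfl
    rw [c1, hg, hg]
    have h := f.comm i j
    calc K.d i j (f.f i x) = (f.f i ≫ K.d i j) x := rfl
      _ = (L.d i j ≫ f.f j) x := by rw [h]
      _ = f.f j (L.d i j x) := rfl
  · apply HomologicalComplex.hom_ext
    intro j
    refine ModuleCat.hom_ext (LinearMap.ext fun x => ?_)
    exact hg j x

lemma range_f_le_of_fac {K A B : ChainComplex (ModuleCat.{0} k) ℤ} {φ : A ⟶ K} {χ : B ⟶ K}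
    (ψ : A ⟶ B) (w : ψ ≫ χ = φ) (j : ℤ) :
    LinearMap.range (φ.f j).hom ≤ LinearMap.range (χ.f j).hom := by
  rintro _ ⟨x, rfl⟩
  refine ⟨ψ.f j x, ?_⟩
  calc χ.f j (ψ.f j x) = (ψ ≫ χ).f j x := rfl
    _ = φ.f j x := by rw [w]

noncomputable def famComplex (K : ChainComplex (ModuleCat.{0} k) ℤ)
    (p : ∀ j : ℤ, Submodule k (K.X j))
    (hp : ∀ (i j : ℤ) (x : K.X i), x ∈ p i → K.d i j x ∈ p j) :
    ChainComplex (ModuleCat.{0} k) ℤ where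
  X j := ModuleCat.of k (p j)
  d i j := ModuleCat.ofHom ((K.d i j).hom.restrict (fun x hx => hp i j x hx))
  shape i j hij := by
    refine ModuleCat.hom_ext (LinearMap.ext fun x => ?_)
    apply Subtype.ext
    have h0 : K.d i j = 0 := K.shape i j hij
    simp [LinearMap.restrict_apply, h0]
  d_comp_d' i j l _ _ := by
    refine ModuleCat.hom_ext (LinearMap.ext fun x => ?_)
    apply Subtype.ext
    have h2 : K.d j l (K.d i j x.1) = 0 := by
      calc K.d j l (K.d i j x.1) = (K.d i j ≫ K.d j l) x.1 := rfl
        _ = (0 : K.X i ⟶ K.X l) x.1 := by rw [K.d_comp_d]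
        _ = 0 := rfl
    show K.d j l (K.d i j x.1) = _
    rw [h2]
    rfl

noncomputable def famι (K : ChainComplex (ModuleCat.{0} k) ℤ)
    (p : ∀ j : ℤ, Submodule k (K.X j))
    (hp : ∀ (i j : ℤ) (x : K.X i), x ∈ p i → K.d i j x ∈ p j) :
    famComplex K p hp ⟶ K where
  f j := ModuleCat.ofHom (p j).subtype
  comm' _ _ _ := rfl

instance famι_mono (K : ChainComplex (ModuleCat.{0} k) ℤ)
    (p : ∀ j : ℤ, Submodule k (K.X j)) (hp) : Mono (famι K p hp) :=
  HomologicalComplex.mono_of_mono_f _ fun _ =>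
    (ModuleCat.mono_iff_injective _).mpr (fun _ _ h => Subtype.ext h)

variable (k)

lemma range_sSub (X : SimplicialObject (ChainComplex (ModuleCat.{0} k) ℤ)) (m' r' : ℕ)
    (h : r' + 1 ≤ m' + 1) (j : ℤ) :
    LinearMap.range ((sSub k X m' r' h).arrow.f j).hom =
      ⨆ i : Fin (r' + 1), LinearMap.range ((X.σ (Fin.castLE h i)).f j).hom := by
  apply le_antisymm
  · -- build the concrete subcomplex
    set K := X.obj (op (SimplexCategory.mk (m' + 1))) with hK
    set p : ∀ n : ℤ, Submodule k (K.X n) :=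
      fun n => ⨆ i : Fin (r' + 1), LinearMap.range ((X.σ (Fin.castLE h i)).f n).hom with hpdef
    have hp : ∀ (a b : ℤ) (x : K.X a), x ∈ p a → K.d a b x ∈ p b := by
      intro a b x hx
      refine Submodule.iSup_induction _ (motive := fun y => K.d a b y ∈ p b) hx ?_ (by simp) ?_
      · rintro i _ ⟨y, rfl⟩
        have hc := (X.σ (Fin.castLE h i)).comm a b
        refine Submodule.mem_iSup_of_mem i ⟨(X.obj (op (SimplexCategory.mk m'))).d a b y, ?_⟩
        calc (X.σ (Fin.castLE h i)).f b ((X.obj (op (SimplexCategory.mk m'))).d a b y)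
            = ((X.obj (op (SimplexCategory.mk m'))).d a b ≫ (X.σ (Fin.castLE h i)).f b) y := rfl
          _ = ((X.σ (Fin.castLE h i)).f a ≫ K.d a b) y := by rw [← hc]
          _ = K.d a b ((X.σ (Fin.castLE h i)).f a y) := rfl
      · intro u v hu hv
        rw [map_add]
        exact add_mem hu hv
    have hmem : ∀ (i : Fin (r' + 1)) (n : ℤ) (y : (X.obj (op (SimplexCategory.mk m'))).X n),
        (X.σ (Fin.castLE h i)).f n y ∈ p n :=
      fun i n y => Submodule.mem_iSup_of_mem i ⟨y, rfl⟩
    let g : ∀ i : Fin (r' + 1), X.obj (op (SimplexCategory.mk m')) ⟶ famComplex K p hp := fun i =>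
      { f := fun n => ModuleCat.ofHom (LinearMap.codRestrict (p n) ((X.σ (Fin.castLE h i)).f n).hom (hmem i n))
        comm' := by
          intro a b _
          refine ModuleCat.hom_ext (LinearMap.ext fun y => ?_)
          apply Subtype.ext
          show K.d a b ((X.σ (Fin.castLE h i)).f a y) =
            (X.σ (Fin.castLE h i)).f b ((X.obj (op (SimplexCategory.mk m'))).d a b y)
          have hc := (X.σ (Fin.castLE h i)).comm a b
          calc K.d a b ((X.σ (Fin.castLE h i)).f a y)
              = ((X.σ (Fin.castLE h i)).f a ≫ K.d a b) y := rfl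
            _ = ((X.obj (op (SimplexCategory.mk m'))).d a b ≫ (X.σ (Fin.castLE h i)).f b) y := by
                  rw [hc]
            _ = (X.σ (Fin.castLE h i)).f b ((X.obj (op (SimplexCategory.mk m'))).d a b y) := rfl }
    have hgι : ∀ i : Fin (r' + 1), g i ≫ famι K p hp = X.σ (Fin.castLE h i) := by
      intro i
      apply HomologicalComplex.hom_ext
      intro n
      rfl
    have hle2 : sSub k X m' r' h ≤ Subobject.mk (famι K p hp) :=
      Finset.sup_le fun i _ => imageSubobject_le_mk _ _ (g i) (hgι i)
    have hfac : (Subobject.ofLE _ _ hle2 ≫ (Subobject.underlyingIso (famι K p hp)).hom) ≫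
        famι K p hp = (sSub k X m' r' h).arrow := by
      rw [Category.assoc, Subobject.underlyingIso_hom_comp_eq_mk, Subobject.ofLE_arrow]
    have h3 := range_f_le_of_fac _ hfac j
    have h4 : LinearMap.range ((famι K p hp).f j).hom = p j := Submodule.range_subtype (p j)
    rw [h4] at h3
    exact h3
  · refine iSup_le fun i => ?_
    have hle' : imageSubobject (X.σ (Fin.castLE h i)) ≤ sSub k X m' r' h :=
      Finset.le_sup (f := fun i : Fin (r' + 1) => imageSubobject (X.σ (Fin.castLE h i)))
        (Finset.mem_univ i)
    exact range_f_le_of_fac (φ := X.σ (Fin.castLE h i)) (χ := (sSub k X m' r' h).arrow)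
      (factorThruImageSubobject _ ≫ Subobject.ofLE _ _ hle')
      (by rw [Category.assoc, Subobject.ofLE_arrow, imageSubobject_arrow_comp]) j

end Aux

section Key
set_option maxHeartbeats 1000000
variable {k}

lemma key1 (X : SimplicialObject (ChainComplex (ModuleCat.{0} k) ℤ)) (m r : ℕ) (hr : r ≤ m)
    (hP : r + 1 ≤ m + 1) (hA : r + 1 ≤ m + 1 + 1) (j : ℤ)
    (x : (X.obj (op (SimplexCategory.mk (m + 1)))).X j)
    (hx : x ∈ ⨆ i : Fin (r + 1), LinearMap.range ((X.σ (Fin.castLE hP i)).f j).hom) :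
    (X.σ (⟨r + 1, by omega⟩ : Fin (m + 2))).f j x ∈
      ⨆ i : Fin (r + 1), LinearMap.range ((X.σ (Fin.castLE hA i)).f j).hom := by
  refine Submodule.iSup_induction _
    (motive := fun y => (X.σ (⟨r + 1, by omega⟩ : Fin (m + 2))).f j y ∈
      ⨆ i : Fin (r + 1), LinearMap.range ((X.σ (Fin.castLE hA i)).f j).hom) hx ?_ (by simp) ?_
  · rintro a _ ⟨y, rfl⟩
    have hid : X.σ (Fin.castLE hP a) ≫ X.σ (⟨r + 1, by omega⟩ : Fin (m + 2)) =
        X.σ (⟨r, by omega⟩ : Fin (m + 1)) ≫ X.σ (Fin.castSucc (Fin.castLE hP a)) := by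
      have h1 := X.σ_comp_σ (n := m) (i := Fin.castLE hP a) (j := ⟨r, by omega⟩)
        (by simp [Fin.le_def]; exact a.is_le)
      have h2 : (⟨r + 1, by omega⟩ : Fin (m + 2)) = (⟨r, by omega⟩ : Fin (m + 1)).succ := by
        ext; simp
      rw [h2]
      exact h1.symm
    have hidx : Fin.castSucc (Fin.castLE hP a) = Fin.castLE hA a := by
      ext; simp
    refine Submodule.mem_iSup_of_mem a
      ⟨(X.σ (⟨r, by omega⟩ : Fin (m + 1))).f j y, ?_⟩
    rw [← hidx]
    calc (X.σ (Fin.castSucc (Fin.castLE hP a))).f j ((X.σ (⟨r, by omega⟩ : Fin (m + 1))).f j y)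
        = (X.σ (⟨r, by omega⟩ : Fin (m + 1)) ≫ X.σ (Fin.castSucc (Fin.castLE hP a))).f j y := rfl
      _ = (X.σ (Fin.castLE hP a) ≫ X.σ (⟨r + 1, by omega⟩ : Fin (m + 2))).f j y := by rw [hid]
      _ = (X.σ (⟨r + 1, by omega⟩ : Fin (m + 2))).f j ((X.σ (Fin.castLE hP a)).f j y) := rfl
  · intro u v hu hv
    rw [map_add]
    exact add_mem hu hv

lemma key2 (X : SimplicialObject (ChainComplex (ModuleCat.{0} k) ℤ)) (m r : ℕ) (hr : r ≤ m)
    (hP : r + 1 ≤ m + 1) (hA : r + 1 ≤ m + 1 + 1) (j : ℤ)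
    (x : (X.obj (op (SimplexCategory.mk (m + 1)))).X j)
    (hx : (X.σ (⟨r + 1, by omega⟩ : Fin (m + 2))).f j x ∈
      ⨆ i : Fin (r + 1), LinearMap.range ((X.σ (Fin.castLE hA i)).f j).hom) :
    x ∈ ⨆ i : Fin (r + 1), LinearMap.range ((X.σ (Fin.castLE hP i)).f j).hom := by
  have hδσ : X.σ (⟨r + 1, by omega⟩ : Fin (m + 2)) ≫ X.δ (⟨r + 2, by omega⟩ : Fin (m + 3)) =
      𝟙 _ := X.δ_comp_σ_succ' (by ext; simp)
  have hx' : x = (X.δ (⟨r + 2, by omega⟩ : Fin (m + 3))).f j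
      ((X.σ (⟨r + 1, by omega⟩ : Fin (m + 2))).f j x) := by
    calc x = (𝟙 (X.obj (op (SimplexCategory.mk (m + 1)))) :
          X.obj (op (SimplexCategory.mk (m + 1))) ⟶ _).f j x := rfl
      _ = (X.σ (⟨r + 1, by omega⟩ : Fin (m + 2)) ≫
            X.δ (⟨r + 2, by omega⟩ : Fin (m + 3))).f j x := by rw [hδσ]
      _ = _ := rfl
  rw [hx']
  refine Submodule.iSup_induction _
    (motive := fun z => (X.δ (⟨r + 2, by omega⟩ : Fin (m + 3))).f j z ∈
      ⨆ i : Fin (r + 1), LinearMap.range ((X.σ (Fin.castLE hP i)).f j).hom) hx ?_ (by simp) ?_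
  · rintro a _ ⟨y, rfl⟩
    have hidx1 : Fin.castSucc (Fin.castLE hP a) = Fin.castLE hA a := by
      ext; simp
    have hidx2 : ((⟨r + 1, by omega⟩ : Fin (m + 2)).succ) =
        (⟨r + 2, by omega⟩ : Fin (m + 3)) := by
      ext; simp
    have hgt := X.δ_comp_σ_of_gt (n := m) (i := (⟨r + 1, by omega⟩ : Fin (m + 2)))
      (j := Fin.castLE hP a) (by simpa [Fin.lt_def] using a.isLt)
    rw [hidx1, hidx2] at hgt
    refine Submodule.mem_iSup_of_mem a ⟨(X.δ (⟨r + 1, by omega⟩ : Fin (m + 2))).f j y, ?_⟩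
    calc (X.σ (Fin.castLE hP a)).f j ((X.δ (⟨r + 1, by omega⟩ : Fin (m + 2))).f j y)
        = (X.δ (⟨r + 1, by omega⟩ : Fin (m + 2)) ≫ X.σ (Fin.castLE hP a)).f j y := rfl
      _ = (X.σ (Fin.castLE hA a) ≫ X.δ (⟨r + 2, by omega⟩ : Fin (m + 3))).f j y := by
            rw [hgt]
      _ = (X.δ (⟨r + 2, by omega⟩ : Fin (m + 3))).f j ((X.σ (Fin.castLE hA a)).f j y) := rfl
  · intro u v hu hv
    rw [map_add]
    exact add_mem hu hv

end Key

section PushoutAux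
set_option maxHeartbeats 1000000
variable {k}

lemma pushoutAux {K1 K2 : ChainComplex (ModuleCat.{0} k) ℤ} {P : Subobject K1}
    {A B : Subobject K2} (hAB : A ≤ B) (σ : K1 ⟶ K2) [IsSplitMono σ]
    (t : (P : ChainComplex (ModuleCat.{0} k) ℤ) ⟶ (A : ChainComplex (ModuleCat.{0} k) ℤ))
    (b : K1 ⟶ (B : ChainComplex (ModuleCat.{0} k) ℤ))
    (ht : t ≫ A.arrow = P.arrow ≫ σ) (hb : b ≫ B.arrow = σ)
    (H1 : ∀ (j : ℤ) (y : ((B : ChainComplex (ModuleCat.{0} k) ℤ)).X j), B.arrow.f j y ∈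
        LinearMap.range (A.arrow.f j).hom ⊔ LinearMap.range (σ.f j).hom)
    (H2 : ∀ (j : ℤ) (c : K1.X j), σ.f j c ∈ LinearMap.range (A.arrow.f j).hom →
        c ∈ LinearMap.range (P.arrow.f j).hom) :
    IsPushout t P.arrow (Subobject.ofLE A B hAB) b ∧
      Mono t ∧ Mono P.arrow ∧ Mono (Subobject.ofLE A B hAB) ∧ Mono b := by
  have sqw : t ≫ Subobject.ofLE A B hAB = P.arrow ≫ b := by
    rw [← cancel_mono B.arrow, Category.assoc, Category.assoc, Subobject.ofLE_arrow, hb, ht]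
  have hzero : biprod.lift t (-P.arrow) ≫ biprod.desc (Subobject.ofLE A B hAB) b = 0 := by
    rw [biprod.lift_desc, Preadditive.neg_comp, sqw, add_neg_cancel]
  have hsurj : ∀ j : ℤ, Function.Surjective
      ((biprod.desc (Subobject.ofLE A B hAB) b).f j) := by
    intro j y
    obtain ⟨u, hu, v, hv, huv⟩ := Submodule.mem_sup.mp (H1 j y)
    obtain ⟨a, ha⟩ := hu
    obtain ⟨c, hc⟩ := hv
    refine ⟨(biprod.inl : (A : ChainComplex (ModuleCat.{0} k) ℤ) ⟶ (A : ChainComplex (ModuleCat.{0} k) ℤ) ⊞ K1).f j a + (biprod.inr : K1 ⟶ (A : ChainComplex (ModuleCat.{0} k) ℤ) ⊞ K1).f j c, ?_⟩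
    apply arrowInj B j
    calc B.arrow.f j ((biprod.desc (Subobject.ofLE A B hAB) b).f j
          ((biprod.inl : (A : ChainComplex (ModuleCat.{0} k) ℤ) ⟶ (A : ChainComplex (ModuleCat.{0} k) ℤ) ⊞ K1).f j a + (biprod.inr : K1 ⟶ (A : ChainComplex (ModuleCat.{0} k) ℤ) ⊞ K1).f j c))
        = (((biprod.inl : (A : ChainComplex (ModuleCat.{0} k) ℤ) ⟶ (A : ChainComplex (ModuleCat.{0} k) ℤ) ⊞ K1) ≫ biprod.desc (Subobject.ofLE A B hAB) b) ≫ B.arrow).f j a +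
          (((biprod.inr : K1 ⟶ (A : ChainComplex (ModuleCat.{0} k) ℤ) ⊞ K1) ≫ biprod.desc (Subobject.ofLE A B hAB) b) ≫ B.arrow).f j c := by
          rw [map_add, map_add]
          rfl
      _ = (Subobject.ofLE A B hAB ≫ B.arrow).f j a + (b ≫ B.arrow).f j c := by
          rw [biprod.inl_desc, biprod.inr_desc]
      _ = u + v := by
          rw [Subobject.ofLE_arrow, hb]
          show A.arrow.f j a + σ.f j c = u + v
          rw [ha, hc]
      _ = B.arrow.f j y := huv
  haveI hepi : Epi (biprod.desc (Subobject.ofLE A B hAB) b) :=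
    HomologicalComplex.epi_of_epi_f _ fun j =>
      (ModuleCat.epi_iff_surjective _).mpr (hsurj j)
  have hex : (ShortComplex.mk (biprod.lift t (-P.arrow))
      (biprod.desc (Subobject.ofLE A B hAB) b) hzero).Exact := by
    apply HomologicalComplex.exact_of_degreewise_exact
    intro j
    rw [ShortComplex.moduleCat_exact_iff]
    intro x hx
    replace hx : (biprod.desc (Subobject.ofLE A B hAB) b).f j x = 0 := hx
    have htot := biprod.total (X := (A : ChainComplex (ModuleCat.{0} k) ℤ)) (Y := K1)
    have hxdec : x = (biprod.inl : (A : ChainComplex (ModuleCat.{0} k) ℤ) ⟶ (A : ChainComplex (ModuleCat.{0} k) ℤ) ⊞ K1).f j ((biprod.fst : (A : ChainComplex (ModuleCat.{0} k) ℤ) ⊞ K1 ⟶ (A : ChainComplex (ModuleCat.{0} k) ℤ)).f j x) + (biprod.inr : K1 ⟶ (A : ChainComplex (ModuleCat.{0} k) ℤ) ⊞ K1).f j ((biprod.snd : (A : ChainComplex (ModuleCat.{0} k) ℤ) ⊞ K1 ⟶ K1).f j x) := by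
      refine Eq.trans (?_ : x = ((biprod.fst : (A : ChainComplex (ModuleCat.{0} k) ℤ) ⊞ K1 ⟶ (A : ChainComplex (ModuleCat.{0} k) ℤ)) ≫ (biprod.inl : (A : ChainComplex (ModuleCat.{0} k) ℤ) ⟶ (A : ChainComplex (ModuleCat.{0} k) ℤ) ⊞ K1) + (biprod.snd : (A : ChainComplex (ModuleCat.{0} k) ℤ) ⊞ K1 ⟶ K1) ≫ (biprod.inr : K1 ⟶ (A : ChainComplex (ModuleCat.{0} k) ℤ) ⊞ K1)).f j x) rfl
      rw [htot]; rfl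
    have hdesc : (biprod.desc (Subobject.ofLE A B hAB) b).f j x =
        (Subobject.ofLE A B hAB).f j ((biprod.fst : (A : ChainComplex (ModuleCat.{0} k) ℤ) ⊞ K1 ⟶ (A : ChainComplex (ModuleCat.{0} k) ℤ)).f j x) + b.f j ((biprod.snd : (A : ChainComplex (ModuleCat.{0} k) ℤ) ⊞ K1 ⟶ K1).f j x) := by
      calc (biprod.desc (Subobject.ofLE A B hAB) b).f j x
          = (biprod.desc (Subobject.ofLE A B hAB) b).f j
              ((biprod.inl : (A : ChainComplex (ModuleCat.{0} k) ℤ) ⟶ (A : ChainComplex (ModuleCat.{0} k) ℤ) ⊞ K1).f j ((biprod.fst : (A : ChainComplex (ModuleCat.{0} k) ℤ) ⊞ K1 ⟶ (A : ChainComplex (ModuleCat.{0} k) ℤ)).f j x) + (biprod.inr : K1 ⟶ (A : ChainComplex (ModuleCat.{0} k) ℤ) ⊞ K1).f j ((biprod.snd : (A : ChainComplex (ModuleCat.{0} k) ℤ) ⊞ K1 ⟶ K1).f j x)) := by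
            rw [← hxdec]
        _ = ((biprod.inl : (A : ChainComplex (ModuleCat.{0} k) ℤ) ⟶ (A : ChainComplex (ModuleCat.{0} k) ℤ) ⊞ K1) ≫ biprod.desc (Subobject.ofLE A B hAB) b).f j ((biprod.fst : (A : ChainComplex (ModuleCat.{0} k) ℤ) ⊞ K1 ⟶ (A : ChainComplex (ModuleCat.{0} k) ℤ)).f j x) +
            ((biprod.inr : K1 ⟶ (A : ChainComplex (ModuleCat.{0} k) ℤ) ⊞ K1) ≫ biprod.desc (Subobject.ofLE A B hAB) b).f j ((biprod.snd : (A : ChainComplex (ModuleCat.{0} k) ℤ) ⊞ K1 ⟶ K1).f j x) := by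
            rw [map_add]
            rfl
        _ = _ := by rw [biprod.inl_desc, biprod.inr_desc]
    have hx2 : (Subobject.ofLE A B hAB).f j ((biprod.fst : (A : ChainComplex (ModuleCat.{0} k) ℤ) ⊞ K1 ⟶ (A : ChainComplex (ModuleCat.{0} k) ℤ)).f j x) + b.f j ((biprod.snd : (A : ChainComplex (ModuleCat.{0} k) ℤ) ⊞ K1 ⟶ K1).f j x) = 0 := by
      rw [← hdesc]
      exact hx
    have h5 : A.arrow.f j ((biprod.fst : (A : ChainComplex (ModuleCat.{0} k) ℤ) ⊞ K1 ⟶ (A : ChainComplex (ModuleCat.{0} k) ℤ)).f j x) + σ.f j ((biprod.snd : (A : ChainComplex (ModuleCat.{0} k) ℤ) ⊞ K1 ⟶ K1).f j x) = 0 := by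
      calc A.arrow.f j ((biprod.fst : (A : ChainComplex (ModuleCat.{0} k) ℤ) ⊞ K1 ⟶ (A : ChainComplex (ModuleCat.{0} k) ℤ)).f j x) + σ.f j ((biprod.snd : (A : ChainComplex (ModuleCat.{0} k) ℤ) ⊞ K1 ⟶ K1).f j x)
          = (Subobject.ofLE A B hAB ≫ B.arrow).f j ((biprod.fst : (A : ChainComplex (ModuleCat.{0} k) ℤ) ⊞ K1 ⟶ (A : ChainComplex (ModuleCat.{0} k) ℤ)).f j x) +
            (b ≫ B.arrow).f j ((biprod.snd : (A : ChainComplex (ModuleCat.{0} k) ℤ) ⊞ K1 ⟶ K1).f j x) := by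
            rw [Subobject.ofLE_arrow, hb]
        _ = B.arrow.f j ((Subobject.ofLE A B hAB).f j ((biprod.fst : (A : ChainComplex (ModuleCat.{0} k) ℤ) ⊞ K1 ⟶ (A : ChainComplex (ModuleCat.{0} k) ℤ)).f j x)) +
            B.arrow.f j (b.f j ((biprod.snd : (A : ChainComplex (ModuleCat.{0} k) ℤ) ⊞ K1 ⟶ K1).f j x)) := rfl
        _ = B.arrow.f j ((Subobject.ofLE A B hAB).f j ((biprod.fst : (A : ChainComplex (ModuleCat.{0} k) ℤ) ⊞ K1 ⟶ (A : ChainComplex (ModuleCat.{0} k) ℤ)).f j x) +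
            b.f j ((biprod.snd : (A : ChainComplex (ModuleCat.{0} k) ℤ) ⊞ K1 ⟶ K1).f j x)) := (map_add (B.arrow.f j).hom _ _).symm
        _ = 0 := by rw [hx2, map_zero]
    have hx3 : σ.f j (-((biprod.snd : (A : ChainComplex (ModuleCat.{0} k) ℤ) ⊞ K1 ⟶ K1).f j x)) = A.arrow.f j ((biprod.fst : (A : ChainComplex (ModuleCat.{0} k) ℤ) ⊞ K1 ⟶ (A : ChainComplex (ModuleCat.{0} k) ℤ)).f j x) := by
      rw [map_neg]
      exact neg_eq_of_add_eq_zero_left h5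
    obtain ⟨q, hq⟩ := H2 j (-((biprod.snd : (A : ChainComplex (ModuleCat.{0} k) ℤ) ⊞ K1 ⟶ K1).f j x)) (hx3 ▸ ⟨(biprod.fst : (A : ChainComplex (ModuleCat.{0} k) ℤ) ⊞ K1 ⟶ (A : ChainComplex (ModuleCat.{0} k) ℤ)).f j x, rfl⟩)
    refine ⟨q, ?_⟩
    show (biprod.lift t (-P.arrow)).f j q = x
    have hta : t.f j q = (biprod.fst : (A : ChainComplex (ModuleCat.{0} k) ℤ) ⊞ K1 ⟶ (A : ChainComplex (ModuleCat.{0} k) ℤ)).f j x := by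
      apply arrowInj A j
      calc A.arrow.f j (t.f j q)
          = (t ≫ A.arrow).f j q := rfl
        _ = (P.arrow ≫ σ).f j q := by rw [ht]
        _ = σ.f j (P.arrow.f j q) := rfl
        _ = σ.f j (-((biprod.snd : (A : ChainComplex (ModuleCat.{0} k) ℤ) ⊞ K1 ⟶ K1).f j x)) := by rw [hq]
        _ = A.arrow.f j ((biprod.fst : (A : ChainComplex (ModuleCat.{0} k) ℤ) ⊞ K1 ⟶ (A : ChainComplex (ModuleCat.{0} k) ℤ)).f j x) := hx3
    have hneg : (-P.arrow).f j q = (biprod.snd : (A : ChainComplex (ModuleCat.{0} k) ℤ) ⊞ K1 ⟶ K1).f j x := by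
      show -(P.arrow.f j q) = (biprod.snd : (A : ChainComplex (ModuleCat.{0} k) ℤ) ⊞ K1 ⟶ K1).f j x
      rw [hq, neg_neg]
    rw [hxdec]
    calc (biprod.lift t (-P.arrow)).f j q
        = ((biprod.fst : (A : ChainComplex (ModuleCat.{0} k) ℤ) ⊞ K1 ⟶ (A : ChainComplex (ModuleCat.{0} k) ℤ)) ≫ (biprod.inl : (A : ChainComplex (ModuleCat.{0} k) ℤ) ⟶ (A : ChainComplex (ModuleCat.{0} k) ℤ) ⊞ K1) + (biprod.snd : (A : ChainComplex (ModuleCat.{0} k) ℤ) ⊞ K1 ⟶ K1) ≫ (biprod.inr : K1 ⟶ (A : ChainComplex (ModuleCat.{0} k) ℤ) ⊞ K1)).f j ((biprod.lift t (-P.arrow)).f j q) := by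
          rw [htot]; rfl
      _ = (biprod.inl : (A : ChainComplex (ModuleCat.{0} k) ℤ) ⟶ (A : ChainComplex (ModuleCat.{0} k) ℤ) ⊞ K1).f j ((biprod.lift t (-P.arrow) ≫ (biprod.fst : (A : ChainComplex (ModuleCat.{0} k) ℤ) ⊞ K1 ⟶ (A : ChainComplex (ModuleCat.{0} k) ℤ))).f j q) +
          (biprod.inr : K1 ⟶ (A : ChainComplex (ModuleCat.{0} k) ℤ) ⊞ K1).f j ((biprod.lift t (-P.arrow) ≫ (biprod.snd : (A : ChainComplex (ModuleCat.{0} k) ℤ) ⊞ K1 ⟶ K1)).f j q) := rfl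
      _ = (biprod.inl : (A : ChainComplex (ModuleCat.{0} k) ℤ) ⟶ (A : ChainComplex (ModuleCat.{0} k) ℤ) ⊞ K1).f j (t.f j q) + (biprod.inr : K1 ⟶ (A : ChainComplex (ModuleCat.{0} k) ℤ) ⊞ K1).f j ((-P.arrow).f j q) := by
          rw [biprod.lift_fst, biprod.lift_snd]
      _ = (biprod.inl : (A : ChainComplex (ModuleCat.{0} k) ℤ) ⟶ (A : ChainComplex (ModuleCat.{0} k) ℤ) ⊞ K1).f j ((biprod.fst : (A : ChainComplex (ModuleCat.{0} k) ℤ) ⊞ K1 ⟶ (A : ChainComplex (ModuleCat.{0} k) ℤ)).f j x) + (biprod.inr : K1 ⟶ (A : ChainComplex (ModuleCat.{0} k) ℤ) ⊞ K1).f j ((biprod.snd : (A : ChainComplex (ModuleCat.{0} k) ℤ) ⊞ K1 ⟶ K1).f j x) := by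
          rw [hta, hneg]
  have sq : CommSq t P.arrow (Subobject.ofLE A B hAB) b := ⟨sqw⟩
  haveI : Epi (ShortComplex.mk (biprod.lift t (-P.arrow))
      (biprod.desc (Subobject.ofLE A B hAB) b) hzero).g := hepi
  refine ⟨?_, ?_, ?_, ?_, ?_⟩
  · exact IsPushout.of_isColimit'
      sq ((sq.isColimitEquivIsColimitCokernelCofork).symm hex.gIsCokernel)
  · haveI : Mono (P.arrow ≫ σ) := mono_comp _ _
    exact mono_of_mono_fac ht
  · infer_instance
  · infer_instance
  · exact mono_of_mono_fac hb

end PushoutAux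

set_option maxHeartbeats 1000000 in
/-- Let `X` be a simplicial unbounded chain complex over a commutative ring
`k`, `n = m + 1 ≥ 1` and `0 ≤ r ≤ n − 1 = m`.  The degeneracy `s_{r+1} : Xₙ ⟶ Xₙ₊₁` carries
`s_{[r]}X_{n−1}` into `s_{[r]}Xₙ`, and the square with top the restricted `s_{r+1}`, left the
inclusion `s_{[r]}X_{n−1} ⊆ Xₙ`, right the inclusion `s_{[r]}Xₙ ⊆ s_{[r+1]}Xₙ`, and bottom
the corestricted `s_{r+1} : Xₙ ⟶ s_{[r+1]}Xₙ`, is a pushout square in `Ch_k`, all of whose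
maps are monomorphisms. -/
theorem degeneracy_pushout_square
    (X : SimplicialObject (ChainComplex (ModuleCat.{0} k) ℤ)) (m r : ℕ) (hr : r ≤ m)
    (hle : sSub k X (m + 1) r (by omega) ≤ sSub k X (m + 1) (r + 1) (by omega)) :
    (∃ t : ((sSub k X m r (by omega) : Subobject _) : ChainComplex (ModuleCat.{0} k) ℤ) ⟶
        ((sSub k X (m + 1) r (by omega) : Subobject _) : ChainComplex (ModuleCat.{0} k) ℤ),
      t ≫ (sSub k X (m + 1) r (by omega)).arrow =
        (sSub k X m r (by omega)).arrow ≫ X.σ ⟨r + 1, by omega⟩) ∧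
    (∀ (t : ((sSub k X m r (by omega) : Subobject _) : ChainComplex (ModuleCat.{0} k) ℤ) ⟶
        ((sSub k X (m + 1) r (by omega) : Subobject _) : ChainComplex (ModuleCat.{0} k) ℤ))
      (_ : t ≫ (sSub k X (m + 1) r (by omega)).arrow =
        (sSub k X m r (by omega)).arrow ≫ X.σ ⟨r + 1, by omega⟩)
      (b : X.obj (op (SimplexCategory.mk (m + 1))) ⟶
        ((sSub k X (m + 1) (r + 1) (by omega) : Subobject _) : ChainComplex (ModuleCat.{0} k) ℤ))
      (_ : b ≫ (sSub k X (m + 1) (r + 1) (by omega)).arrow = X.σ ⟨r + 1, by omega⟩),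
      IsPushout t (sSub k X m r (by omega)).arrow
          (Subobject.ofLE _ _ hle) b ∧
        Mono t ∧ Mono (sSub k X m r (by omega)).arrow ∧
        Mono (Subobject.ofLE (sSub k X (m + 1) r (by omega))
          (sSub k X (m + 1) (r + 1) (by omega)) hle) ∧ Mono b) := by
  have hP : r + 1 ≤ m + 1 := by omega
  have hA : r + 1 ≤ m + 1 + 1 := by omega
  have hB : r + 1 + 1 ≤ m + 1 + 1 := by omega
  have hrm2 : r + 1 < m + 2 := by omega
  have hδσ : (X.σ (⟨r + 1, hrm2⟩ : Fin (m + 2))) ≫ X.δ (⟨r + 2, by omega⟩ : Fin (m + 3)) = 𝟙 _ :=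
    X.δ_comp_σ_succ' (by ext; simp)
  haveI hσm : IsSplitMono (X.σ (⟨r + 1, hrm2⟩ : Fin (m + 2))) :=
    IsSplitMono.mk' ⟨X.δ (⟨r + 2, by omega⟩ : Fin (m + 3)), hδσ⟩
  constructor
  · -- existence of t
    have hfac : (sSub k X (m + 1) r hA).Factors ((sSub k X m r hP).arrow ≫ (X.σ (⟨r + 1, hrm2⟩ : Fin (m + 2)))) := by
      apply factors_of_range_le
      intro j x
      rw [range_sSub k X (m + 1) r hA j]
      have hx : (sSub k X m r hP).arrow.f j x ∈
          ⨆ i : Fin (r + 1), LinearMap.range ((X.σ (Fin.castLE hP i)).f j).hom := by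
        rw [← range_sSub k X m r hP j]
        exact ⟨x, rfl⟩
      exact key1 X m r hr hP hA j _ hx
    exact ⟨(sSub k X (m + 1) r hA).factorThru _ hfac, Subobject.factorThru_arrow _ _ hfac⟩
  · intro t ht b hb
    have ht' : t ≫ (sSub k X (m + 1) r hA).arrow = (sSub k X m r hP).arrow ≫ (X.σ (⟨r + 1, hrm2⟩ : Fin (m + 2))) := ht
    have hb' : b ≫ (sSub k X (m + 1) (r + 1) hB).arrow = (X.σ (⟨r + 1, hrm2⟩ : Fin (m + 2))) := hb
    have hle' : sSub k X (m + 1) r hA ≤ sSub k X (m + 1) (r + 1) hB := hle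
    have H1 : ∀ (j : ℤ)
        (y : ((sSub k X (m + 1) (r + 1) hB : Subobject _) :
          ChainComplex (ModuleCat.{0} k) ℤ).X j),
        (sSub k X (m + 1) (r + 1) hB).arrow.f j y ∈
          LinearMap.range ((sSub k X (m + 1) r hA).arrow.f j).hom ⊔
            LinearMap.range ((X.σ (⟨r + 1, hrm2⟩ : Fin (m + 2))).f j).hom := by
      intro j y
      have hsup : LinearMap.range ((sSub k X (m + 1) (r + 1) hB).arrow.f j).hom ≤
          LinearMap.range ((sSub k X (m + 1) r hA).arrow.f j).hom ⊔
            LinearMap.range ((X.σ (⟨r + 1, hrm2⟩ : Fin (m + 2))).f j).hom := by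
        rw [range_sSub k X (m + 1) (r + 1) hB j]
        refine iSup_le fun i => ?_
        rcases Nat.lt_or_ge i.val (r + 1) with hi | hi
        · have hidx : Fin.castLE hB i = Fin.castLE hA ⟨i.val, hi⟩ := by ext; simp
          rw [hidx]
          refine le_trans ?_ le_sup_left
          rw [range_sSub k X (m + 1) r hA j]
          exact le_iSup (fun i' : Fin (r + 1) =>
            LinearMap.range ((X.σ (Fin.castLE hA i')).f j).hom) ⟨i.val, hi⟩
        · have hieq : Fin.castLE hB i = (⟨r + 1, hrm2⟩ : Fin (m + 2)) := by
            have h9 := i.isLt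
            ext
            simp only [Fin.coe_castLE]
            omega
          rw [hieq]
          exact le_sup_right
      exact hsup ⟨y, rfl⟩
    have H2 : ∀ (j : ℤ) (c : (X.obj (op (SimplexCategory.mk (m + 1)))).X j),
        (X.σ (⟨r + 1, hrm2⟩ : Fin (m + 2))).f j c ∈ LinearMap.range ((sSub k X (m + 1) r hA).arrow.f j).hom →
          c ∈ LinearMap.range ((sSub k X m r hP).arrow.f j).hom := by
      intro j c hc
      rw [range_sSub k X m r hP j]
      apply key2 X m r hr hP hA j
      rw [← range_sSub k X (m + 1) r hA j]
      exact hc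
    exact pushoutAux hle' (X.σ (⟨r + 1, hrm2⟩ : Fin (m + 2))) t b ht' hb' H1 H2
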